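/- Let H be a Hilbert space, x₁, …, xₙ ∈ H, a ∈ H with ‖a‖ = 1, and r ≥ 0 with r‖xᵢ‖ ≤ Re⟨xᵢ, a⟩ for all i. Then equality r ∑ᵢ ‖xᵢ‖ = ‖∑ᵢ xᵢ‖ holds if and only if ∑ᵢ₌₁ⁿ xᵢ = r (∑ᵢ₌₁ⁿ ‖xᵢ‖) a. -/

import Mathlib

theorem stmt_18 {𝕜 H : Type*} [RCLike 𝕜] [NormedAddCommGroup H] [InnerProductSpace 𝕜 H]
    {n : ℕ} {x : Fin n → H} {A : H} (hA : ‖A‖ = 1)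
    {r : ℝ} (hr : 0 ≤ r) (h : ∀ i, r * ‖x i‖ ≤ RCLike.re (inner 𝕜 (x i) A : 𝕜)) :
    r * ∑ i, ‖x i‖ = ‖∑ i, x i‖ ↔ ∑ i, x i = ((r * ∑ i, ‖x i‖ : ℝ) : 𝕜) • A := by
  set S := ∑ i, x i with hS
  have hT : (0:ℝ) ≤ ∑ i, ‖x i‖ := Finset.sum_nonneg fun i _ => norm_nonneg _
  constructor
  · intro heq
    have h1 : r * ∑ i, ‖x i‖ ≤ RCLike.re (inner 𝕜 S A : 𝕜) := by
      rw [hS, sum_inner, map_sum, Finset.mul_sum]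
      exact Finset.sum_le_sum fun i _ => h i
    have h2 : RCLike.re (inner 𝕜 S A : 𝕜) ≤ ‖(inner 𝕜 S A : 𝕜)‖ := RCLike.re_le_norm _
    have h3 : ‖(inner 𝕜 S A : 𝕜)‖ ≤ ‖S‖ := by
      simpa [hA] using norm_inner_le_norm (𝕜 := 𝕜) S A
    have hre : ‖(inner 𝕜 S A : 𝕜)‖ ≤ RCLike.re (inner 𝕜 S A : 𝕜) := by
      rw [heq] at h1; linarith
    have hz : ((RCLike.re (inner 𝕜 S A : 𝕜) : ℝ) : 𝕜) = inner 𝕜 S A :=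
      RCLike.re_eq_self_of_le hre
    have hnorm : RCLike.re (inner 𝕜 S A : 𝕜) = ‖S‖ := by
      rw [heq] at h1; linarith
    have hinner : (inner 𝕜 S A : 𝕜) = (‖S‖ : 𝕜) * ‖A‖ := by
      rw [← hz, hnorm, hA]; push_cast; ring
    have := inner_eq_norm_mul_iff.mp hinner
    rw [hA] at this
    rw [heq]; simpa using this
  · intro heq
    rw [heq, norm_smul]
    have : ‖((r * ∑ i, ‖x i‖ : ℝ) : 𝕜)‖ = r * ∑ i, ‖x i‖ := by
      rw [RCLike.norm_ofReal, abs_of_nonneg (mul_nonneg hr hT)]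
    rw [this, hA, mul_one]
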